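/- In the set-cover reduction graph G with source set S = {σ₁,…,σ_p}, destination set T = {c}, and penalty τ = 1.99, for every nonempty index set J ⊆ {1,…,q} the peer set U = {c} ∪ {γ⁻_j : j ∈ J} has adversarial advantage A_G(U) = |{i : σ_i ∈ ⋃_{j∈J} Γ_j}|, the number of elements covered by the subsets indexed by J. (Since all distances in G are integers and τ = 1.99, the condition d_U(s,t) + τ < d(s,t) is equivalent to d_U(s,t) ≤ d(s,t) − 2 and the ½-weighted tie term never contributes.) -/

import Mathlib

open scoped Classical

/-- Shortcut distance through the adversary node, joined by zero-weight links to all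
nodes of the peer set `U`: `d_U(s,t) = min_{u, u' ∈ U} (d(s,u) + d(u',t))`. -/
noncomputable def shortcutDist {V : Type*} (G : SimpleGraph V) (U : Finset V) (s t : V) : ℕ :=
  sInf {n : ℕ | ∃ u ∈ U, ∃ u' ∈ U, n = G.dist s u + G.dist u' t}

/-- Adversarial advantage
`A_N(U) = ∑_{s ∈ S, t ∈ T} (1[d_U(s,t) + τ < d(s,t)] + ½·1[d_U(s,t) + τ = d(s,t)])`. -/
noncomputable def advantage {V : Type*} (G : SimpleGraph V) (S T U : Finset V) (τ : ℝ) : ℝ :=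
  ∑ s ∈ S, ∑ t ∈ T,
    ((if (shortcutDist G U s t : ℝ) + τ < (G.dist s t : ℝ) then (1 : ℝ) else 0)
      + (1 / 2) * (if (shortcutDist G U s t : ℝ) + τ = (G.dist s t : ℝ) then (1 : ℝ) else 0))

/-- Vertices of the set-cover reduction graph: a center `c`, element vertices `σᵢ`,
and two vertices `γ⁺ⱼ`, `γ⁻ⱼ` for each subset `Γⱼ`. -/
inductive SCVertex (p q : ℕ) : Type
  | center : SCVertex p q
  | elem : Fin p → SCVertex p q
  | plus : Fin q → SCVertex p q
  | minus : Fin q → SCVertex p q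
  deriving DecidableEq, Fintype

/-- Base relation generating the edges of the reduction graph: `{σᵢ, γ⁻ⱼ}` whenever
`σᵢ ∈ Γⱼ`, `{γ⁻ⱼ, γ⁺ⱼ}` for every `j`, and `{γ⁺ⱼ, c}` for every `j`. -/
def scRel {p q : ℕ} (Γ : Fin q → Finset (Fin p)) : SCVertex p q → SCVertex p q → Prop
  | .elem i, .minus j => i ∈ Γ j
  | .minus j, .plus j' => j = j'
  | .plus _, .center => True
  | _, _ => False

/-- The set-cover reduction graph `G`. -/
def scGraph {p q : ℕ} (Γ : Fin q → Finset (Fin p)) : SimpleGraph (SCVertex p q) :=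
  SimpleGraph.fromRel (scRel Γ)

/-- The source set `S = {σ₁, …, σ_p}`. -/
def scSources (p q : ℕ) : Finset (SCVertex p q) :=
  Finset.univ.image SCVertex.elem

/-- The destination set `T = {c}`. -/
def scDests (p q : ℕ) : Finset (SCVertex p q) :=
  {SCVertex.center}

section Aux


lemma pot_walk {V : Type*} {G : SimpleGraph V} (φ : V → ℤ)
    (hφ : ∀ a b, G.Adj a b → φ b ≤ φ a + 1) :
    ∀ {x y : V} (w : G.Walk x y), φ y ≤ φ x + w.length := by
  intro x y w
  induction w with
  | nil => simp
  | @cons a b c h w ih =>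
    have := hφ a b h
    simp only [SimpleGraph.Walk.length_cons]
    push_cast
    omega

lemma pot_dist {V : Type*} {G : SimpleGraph V} (φ : V → ℤ)
    (hφ : ∀ a b, G.Adj a b → φ b ≤ φ a + 1) {x y : V} (h : G.Reachable x y) :
    φ y ≤ φ x + G.dist x y := by
  obtain ⟨w, hw⟩ := h.exists_walk_length_eq_dist
  simpa [hw] using pot_walk φ hφ w


end Aux

section SC
variable {p q : ℕ} {Γ : Fin q → Finset (Fin p)}

lemma adj_em {i : Fin p} {j : Fin q} (h : i ∈ Γ j) :
    (scGraph Γ).Adj (.elem i) (.minus j) := by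
  rw [scGraph, SimpleGraph.fromRel_adj]
  exact ⟨by simp, Or.inl h⟩

lemma adj_mp (j : Fin q) : (scGraph Γ).Adj (.minus j) (.plus j) := by
  rw [scGraph, SimpleGraph.fromRel_adj]
  exact ⟨by simp, Or.inl rfl⟩

lemma adj_pc (j : Fin q) : (scGraph Γ).Adj (.plus j) .center := by
  rw [scGraph, SimpleGraph.fromRel_adj]
  exact ⟨by simp, Or.inl trivial⟩

lemma reach_center (hcov : ∀ i : Fin p, ∃ j : Fin q, i ∈ Γ j) :
    ∀ v : SCVertex p q, (scGraph Γ).Reachable v .center := by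
  intro v
  match v with
  | .center => exact SimpleGraph.Reachable.refl _
  | .plus j => exact (adj_pc j).reachable
  | .minus j => exact (adj_mp j).reachable.trans (adj_pc j).reachable
  | .elem i =>
    obtain ⟨j, hj⟩ := hcov i
    exact (adj_em hj).reachable.trans ((adj_mp j).reachable.trans (adj_pc j).reachable)

lemma dist_elem_center {i : Fin p} {j : Fin q} (hj : i ∈ Γ j) :
    (scGraph Γ).dist (.elem i) .center = 3 := by
  have hub : (scGraph Γ).dist (.elem i) .center ≤ 3 := by
    simpa using (scGraph Γ).dist_le
      (.cons (adj_em hj) (.cons (adj_mp j) (.cons (adj_pc j) .nil)))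
  have hlb : (3 : ℤ) ≤ (scGraph Γ).dist (.elem i) .center := by
    have := pot_dist (G := scGraph Γ)
      (fun v => match v with
        | .center => 3 | .plus _ => 2 | .minus _ => 1 | .elem _ => 0)
      (by
        intro a b hab
        rw [scGraph, SimpleGraph.fromRel_adj] at hab
        obtain ⟨hne, h | h⟩ := hab <;>
          rcases a with _ | i' | j' | j' <;> rcases b with _ | i'' | j'' | j'' <;>
          simp_all [scRel])
      ((adj_em hj).reachable.trans ((adj_mp j).reachable.trans (adj_pc j).reachable))
    simpa using this
  omega

lemma dist_elem_minus_ge {i : Fin p} {J : Finset (Fin q)}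
    (hi : i ∉ J.biUnion Γ) {j : Fin q} (hjJ : j ∈ J)
    (hcov : ∀ i : Fin p, ∃ j : Fin q, i ∈ Γ j) :
    3 ≤ (scGraph Γ).dist (.elem i) (.minus j) := by
  have hr : (scGraph Γ).Reachable (SCVertex.elem i) (.minus j) :=
    (reach_center hcov _).trans (reach_center hcov _).symm
  have hlb := pot_dist (G := scGraph Γ)
      (fun v => match v with
        | .center => 3
        | .plus _ => 2
        | .minus j' => if j' ∈ J then 3 else 1
        | .elem i' => if i' ∈ J.biUnion Γ then 2 else if i' = i then 0 else 1)
      (by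
        intro a b hab
        rw [scGraph, SimpleGraph.fromRel_adj] at hab
        obtain ⟨hne, h | h⟩ := hab <;>
          rcases a with _ | i' | j' | j' <;> rcases b with _ | i'' | j'' | j'' <;>
          simp_all [scRel] <;>
          split_ifs <;>
          simp_all [Finset.mem_biUnion] <;> omega)
      hr
  simp only [] at hlb
  rw [if_pos hjJ, if_neg hi, if_pos trivial] at hlb
  omega

lemma shortcut_covered {i : Fin p} {J : Finset (Fin q)} {j : Fin q}
    (hjJ : j ∈ J) (hij : i ∈ Γ j)
    (hcov : ∀ i : Fin p, ∃ j : Fin q, i ∈ Γ j) :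
    shortcutDist (scGraph Γ) (insert SCVertex.center (J.image SCVertex.minus))
      (.elem i) .center = 1 := by
  set U := insert SCVertex.center (J.image SCVertex.minus) with hU
  have h1 : (1 : ℕ) ∈ {n : ℕ | ∃ u ∈ U, ∃ u' ∈ U, n = (scGraph Γ).dist (.elem i) u
      + (scGraph Γ).dist u' .center} := by
    refine ⟨.minus j, ?_, .center, ?_, ?_⟩
    · exact Finset.mem_insert_of_mem (Finset.mem_image_of_mem _ hjJ)
    · exact Finset.mem_insert_self _ _
    · rw [SimpleGraph.dist_self, (SimpleGraph.dist_eq_one_iff_adj).mpr (adj_em hij)]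
  have hle : sInf {n : ℕ | ∃ u ∈ U, ∃ u' ∈ U, n = (scGraph Γ).dist (.elem i) u
      + (scGraph Γ).dist u' .center} ≤ 1 := Nat.sInf_le h1
  have hmem := Nat.sInf_mem (Set.nonempty_of_mem h1)
  have hne : sInf {n : ℕ | ∃ u ∈ U, ∃ u' ∈ U, n = (scGraph Γ).dist (.elem i) u
      + (scGraph Γ).dist u' .center} ≠ 0 := by
    intro h0
    rw [h0] at hmem
    obtain ⟨u, hu, u', hu', heq⟩ := hmem
    have hd0 : (scGraph Γ).dist (.elem i) u = 0 := by omega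
    have hr : (scGraph Γ).Reachable (SCVertex.elem i) u :=
      (reach_center hcov _).trans (reach_center hcov _).symm
    have := (hr.dist_eq_zero_iff).mp hd0
    rw [hU, Finset.mem_insert] at hu
    rcases hu with h | h
    · rw [h] at this; exact nomatch this
    · obtain ⟨j', _, hj'⟩ := Finset.mem_image.mp h
      rw [← hj'] at this; exact nomatch this
  rw [shortcutDist]
  omega

lemma shortcut_uncovered {i : Fin p} {J : Finset (Fin q)}
    (hi : i ∉ J.biUnion Γ)
    (hcov : ∀ i : Fin p, ∃ j : Fin q, i ∈ Γ j) :
    shortcutDist (scGraph Γ) (insert SCVertex.center (J.image SCVertex.minus))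
      (.elem i) .center = 3 := by
  obtain ⟨j0, hj0⟩ := hcov i
  set U := insert SCVertex.center (J.image SCVertex.minus) with hU
  have h3 : (3 : ℕ) ∈ {n : ℕ | ∃ u ∈ U, ∃ u' ∈ U, n = (scGraph Γ).dist (.elem i) u
      + (scGraph Γ).dist u' .center} := by
    refine ⟨.center, Finset.mem_insert_self _ _, .center, Finset.mem_insert_self _ _, ?_⟩
    rw [SimpleGraph.dist_self, dist_elem_center hj0]
  refine le_antisymm (Nat.sInf_le h3) (le_csInf (Set.nonempty_of_mem h3) ?_)
  rintro n ⟨u, hu, u', hu', rfl⟩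
  have h3' : 3 ≤ (scGraph Γ).dist (.elem i) u := by
    rw [hU, Finset.mem_insert] at hu
    rcases hu with h | h
    · rw [h, dist_elem_center hj0]
    · obtain ⟨j', hj', rfl⟩ := Finset.mem_image.mp h
      exact dist_elem_minus_ge hi hj' hcov
  omega

end SC

/-- In the set-cover reduction graph with `S = {σ₁,…,σ_p}`, `T = {c}` and
penalty `τ = 1.99`, for every nonempty `J ⊆ {1,…,q}` the peer set
`U = {c} ∪ {γ⁻ⱼ : j ∈ J}` has adversarial advantage equal to the number of elements covered
by the subsets indexed by `J`, i.e. `A_G(U) = |⋃_{j ∈ J} Γⱼ|`. -/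
theorem stmt_2 {p q : ℕ} (hp : 1 ≤ p) (hq : 1 ≤ q) (Γ : Fin q → Finset (Fin p))
    (hcov : ∀ i : Fin p, ∃ j : Fin q, i ∈ Γ j)
    (J : Finset (Fin q)) (hJ : J.Nonempty) :
    advantage (scGraph Γ) (scSources p q) (scDests p q)
        (insert SCVertex.center (J.image SCVertex.minus)) (1.99 : ℝ)
      = ((J.biUnion Γ).card : ℝ) := by
  classical
  rw [advantage, scDests, scSources,
    Finset.sum_image (fun a _ b _ h => SCVertex.elem.inj h)]
  simp only [Finset.sum_singleton]
  have key : ∀ i : Fin p,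
      ((if (shortcutDist (scGraph Γ) (insert SCVertex.center (J.image SCVertex.minus))
            (.elem i) .center : ℝ) + 1.99
            < ((scGraph Γ).dist (.elem i) .center : ℝ) then (1 : ℝ) else 0)
        + (1 / 2) * (if (shortcutDist (scGraph Γ)
            (insert SCVertex.center (J.image SCVertex.minus)) (.elem i) .center : ℝ) + 1.99
            = ((scGraph Γ).dist (.elem i) .center : ℝ) then (1 : ℝ) else 0))
      = if i ∈ J.biUnion Γ then (1 : ℝ) else 0 := by
    intro i
    by_cases h : i ∈ J.biUnion Γ
    · obtain ⟨j, hjJ, hij⟩ := Finset.mem_biUnion.mp h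
      rw [shortcut_covered hjJ hij hcov, dist_elem_center hij, if_pos h]
      norm_num
    · obtain ⟨j0, hj0⟩ := hcov i
      rw [shortcut_uncovered h hcov, dist_elem_center hj0, if_neg h]
      norm_num
  rw [Finset.sum_congr rfl (fun i _ => key i), Finset.sum_ite_mem, Finset.univ_inter,
    Finset.sum_const, nsmul_eq_mul, mul_one]
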